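/- (Jaw Lemma) For every trapezoid representation (l, r, L, R) of the jaw order J, either the inequalities r B < l C ≤ r 1 < l 2 ≤ r E < l D ≤ r 2 < l 3 ≤ r F < l G together with R E < L 2 and R 2 < L D all hold, or the inequalities R B < L C ≤ R 1 < L 2 ≤ R E < L D ≤ R 2 < L 3 ≤ R F < L G together with r E < l 2 and r 2 < l D all hold. -/
import Mathlib


/-- The nine elements {1, 2, 3, B, C, D, E, F, G} of the jaw order. -/
inductive JawElt : Type
  | e1 | e2 | e3 | B | C | D | E | F | G
  deriving DecidableEq

open JawElt

/-- The jaw order: its strict comparabilities are exactly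
1≺2, 2≺3, 1≺3, 1≺D, B≺C, B≺D, E≺D, E≺F, F≺G, E≺G, E≺3. -/
def jawLT : JawElt → JawElt → Prop := fun u v =>
  (u, v) ∈ ([(e1, e2), (e2, e3), (e1, e3), (e1, D), (B, C), (B, D),
    (E, D), (E, F), (F, G), (E, G), (E, e3)] : List (JawElt × JawElt))

lemma jaw_key (l r L R : JawElt → ℝ)
    (hlr : ∀ u, l u ≤ r u) (hLR : ∀ u, L u ≤ R u)
    (hrep : ∀ u v, jawLT u v ↔ (r u < l v ∧ R u < L v))
    (hE2 : l e2 ≤ r E) (hE2' : R E < L e2) :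
    r B < l C ∧ l C ≤ r e1 ∧ r e1 < l e2 ∧ l e2 ≤ r E ∧ r E < l D ∧
      l D ≤ r e2 ∧ r e2 < l e3 ∧ l e3 ≤ r F ∧ r F < l G ∧
      R E < L e2 ∧ R e2 < L D := by
  have nc : ∀ u v, ¬ jawLT u v → (l v ≤ r u ∨ L v ≤ R u) := by
    intro u v h
    by_contra hc
    push_neg at hc
    exact h ((hrep u v).mpr ⟨hc.1, hc.2⟩)
  obtain ⟨c12, c12'⟩ := (hrep e1 e2).mp (by unfold jawLT; decide)
  obtain ⟨c23, c23'⟩ := (hrep e2 e3).mp (by unfold jawLT; decide)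
  obtain ⟨c13, c13'⟩ := (hrep e1 e3).mp (by unfold jawLT; decide)
  obtain ⟨c1D, c1D'⟩ := (hrep e1 D).mp (by unfold jawLT; decide)
  obtain ⟨cBC, cBC'⟩ := (hrep B C).mp (by unfold jawLT; decide)
  obtain ⟨cBD, cBD'⟩ := (hrep B D).mp (by unfold jawLT; decide)
  obtain ⟨cED, cED'⟩ := (hrep E D).mp (by unfold jawLT; decide)
  obtain ⟨cEF, cEF'⟩ := (hrep E F).mp (by unfold jawLT; decide)
  obtain ⟨cFG, cFG'⟩ := (hrep F G).mp (by unfold jawLT; decide)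
  obtain ⟨cEG, cEG'⟩ := (hrep E G).mp (by unfold jawLT; decide)
  obtain ⟨cE3, cE3'⟩ := (hrep E e3).mp (by unfold jawLT; decide)
  have n1G := nc e1 G (by unfold jawLT; decide)
  have nB3 := nc B e3 (by unfold jawLT; decide)
  have nBG := nc B G (by unfold jawLT; decide)
  have nEC := nc E C (by unfold jawLT; decide)
  have nFD := nc F D (by unfold jawLT; decide)
  -- Step 1: the pair (2, D)
  have h2D : l D ≤ r e2 ∧ R e2 < L D := by
    rcases le_or_gt (l D) (r e2) with h | h
    · refine ⟨h, ?_⟩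
      by_contra hx
      push_neg at hx
      exact absurd ((hrep B e3).mpr ⟨by linarith, by linarith⟩) (by unfold jawLT; decide)
    · exfalso
      have hLD : L D ≤ R e2 := (nc e2 D (by unfold jawLT; decide)).resolve_left (not_le.mpr h)
      have h1 := hlr e1; have h2 := hlr e2; have h3 := hlr e3
      have h4 := hlr B; have h5 := hlr C; have h6 := hlr D
      have h7 := hlr E; have h8 := hlr F; have h9 := hlr G
      have g1 := hLR e1; have g2 := hLR e2; have g3 := hLR e3
      have g4 := hLR B; have g5 := hLR C; have g6 := hLR D
      have g7 := hLR E; have g8 := hLR F; have g9 := hLR G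
      rcases n1G with k1 | k1 <;> rcases nB3 with k2 | k2 <;>
        rcases nBG with k3 | k3 <;> rcases nEC with k4 | k4 <;>
        rcases nFD with k5 | k5 <;> linarith
  obtain ⟨h2D1, h2D2⟩ := h2D
  -- Step 2: the pair (C, 1)
  have hC1 : l C ≤ r e1 ∧ R e1 < L C := by
    rcases le_or_gt (l C) (r e1) with h | h
    · refine ⟨h, ?_⟩
      by_contra hx
      push_neg at hx
      exact absurd ((hrep B e2).mpr ⟨by linarith, by linarith⟩) (by unfold jawLT; decide)
    · exfalso
      have hLC : L C ≤ R e1 := (nc e1 C (by unfold jawLT; decide)).resolve_left (not_le.mpr h)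
      have g4 := hLR B
      rcases nB3 with k2 | k2 <;> linarith [hlr B, hlr e2, hLR e2]
  obtain ⟨hC11, hC12⟩ := hC1
  -- Step 3: the pair (3, F)
  have h3F : l e3 ≤ r F ∧ R F < L e3 := by
    rcases le_or_gt (l e3) (r F) with h | h
    · refine ⟨h, ?_⟩
      by_contra hx
      push_neg at hx
      exact absurd ((hrep e2 G).mpr ⟨by linarith, by linarith⟩) (by unfold jawLT; decide)
    · exfalso
      have hL3 : L e3 ≤ R F := (nc F e3 (by unfold jawLT; decide)).resolve_left (not_le.mpr h)
      rcases n1G with k1 | k1 <;>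
        linarith [hlr e1, hlr e2, hlr F, hLR e1, hLR e2, hLR F, hlr G, hLR G]
  obtain ⟨h3F1, h3F2⟩ := h3F
  exact ⟨cBC, hC11, c12, hE2, cED, h2D1, c23, h3F1, cFG, hE2', h2D2⟩

/-- The Jaw Lemma: in every trapezoid representation of the jaw order,
either the chain of inequalities
`r B < l C ≤ r 1 < l 2 ≤ r E < l D ≤ r 2 < l 3 ≤ r F < l G`
together with `R E < L 2` and `R 2 < L D` hold, or the same with the roles
of the upper and lower baselines exchanged. -/
theorem jaw_lemma (l r L R : JawElt → ℝ)
    (hlr : ∀ u, l u ≤ r u) (hLR : ∀ u, L u ≤ R u)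
    (hrep : ∀ u v, jawLT u v ↔ (r u < l v ∧ R u < L v)) :
    (r B < l C ∧ l C ≤ r e1 ∧ r e1 < l e2 ∧ l e2 ≤ r E ∧ r E < l D ∧
      l D ≤ r e2 ∧ r e2 < l e3 ∧ l e3 ≤ r F ∧ r F < l G ∧
      R E < L e2 ∧ R e2 < L D) ∨
    (R B < L C ∧ L C ≤ R e1 ∧ R e1 < L e2 ∧ L e2 ≤ R E ∧ R E < L D ∧
      L D ≤ R e2 ∧ R e2 < L e3 ∧ L e3 ≤ R F ∧ R F < L G ∧
      r E < l e2 ∧ r e2 < l D) := by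
  obtain ⟨c12, c12'⟩ := (hrep e1 e2).mp (by unfold jawLT; decide)
  obtain ⟨cEF, cEF'⟩ := (hrep E F).mp (by unfold jawLT; decide)
  rcases le_or_gt (l e2) (r E) with h | h
  · left
    have hE2' : R E < L e2 := by
      by_contra hx
      push_neg at hx
      exact absurd ((hrep e1 F).mpr ⟨by linarith, by linarith⟩) (by unfold jawLT; decide)
    exact jaw_key l r L R hlr hLR hrep h hE2'
  · right
    have hL2 : L e2 ≤ R E := by
      by_contra hx
      push_neg at hx
      exact absurd ((hrep E e2).mpr ⟨by linarith, by linarith⟩) (by unfold jawLT; decide)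
    exact jaw_key L R l r hLR hlr (fun u v => (hrep u v).trans and_comm) hL2 h
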